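/- Let Y > 0, α > 0, and y ∈ [-Y, Y]. Define g(z) = Y·√(αz+1) − Y for z ≥ 0 and g(z) = −Y·√(−αz+1) + Y for z < 0. Then the function z ↦ (g(z) − y)² is convex on ℝ. -/

import Mathlib

/-- For `Y > 0`, `α > 0`, `y ∈ [-Y, Y]`, the composed squared loss
`z ↦ (g(z) - y)²` with the piecewise square-root transform `g` is convex on ℝ. -/
theorem stmt2 (Y α y : ℝ) (hY : 0 < Y) (hα : 0 < α) (hy : -Y ≤ y ∧ y ≤ Y) :
    ConvexOn ℝ Set.univ (fun z : ℝ =>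
      ((if 0 ≤ z then Y * Real.sqrt (α * z + 1) - Y
        else -Y * Real.sqrt (-α * z + 1) + Y) - y) ^ 2) := by
  obtain ⟨hy1, hy2⟩ := hy
  set f : ℝ → ℝ := fun z : ℝ =>
      ((if 0 ≤ z then Y * Real.sqrt (α * z + 1) - Y
        else -Y * Real.sqrt (-α * z + 1) + Y) - y) ^ 2 with hf
  set d : ℝ → ℝ := fun z : ℝ =>
      if 0 ≤ z then α * Y ^ 2 - α * Y * (Y + y) / Real.sqrt (α * z + 1)
      else -(α * Y ^ 2) + α * Y * (Y - y) / Real.sqrt (-α * z + 1) with hd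
  -- derivative of the right branch
  have hFp : ∀ z : ℝ, 0 ≤ z →
      HasDerivAt (fun w : ℝ => (Y * Real.sqrt (α * w + 1) - Y - y) ^ 2)
        (α * Y ^ 2 - α * Y * (Y + y) / Real.sqrt (α * z + 1)) z := by
    intro z hz
    have h1 : (0:ℝ) < α * z + 1 := by nlinarith
    have hs : 0 < Real.sqrt (α * z + 1) := Real.sqrt_pos.2 h1
    have h2 : HasDerivAt (fun w : ℝ => α * w + 1) α z := by
      simpa using ((hasDerivAt_id z).const_mul α).add_const 1
    have h3 : HasDerivAt (fun w : ℝ => Real.sqrt (α * w + 1))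
        (1 / (2 * Real.sqrt (α * z + 1)) * α) z :=
      (Real.hasDerivAt_sqrt h1.ne').comp z h2
    have h4 := (((h3.const_mul Y).sub_const Y).sub_const y).pow 2
    have hs' : Real.sqrt (α * z + 1) ≠ 0 := hs.ne'
    convert h4 using 1
    set s := Real.sqrt (α * z + 1) with hsdef
    case e'_4 => rfl
    case e'_5 => rfl
    case e'_8 => rfl
    field_simp
    ring
  -- derivative of the left branch
  have hFm : ∀ z : ℝ, z ≤ 0 →
      HasDerivAt (fun w : ℝ => (-Y * Real.sqrt (-α * w + 1) + Y - y) ^ 2)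
        (-(α * Y ^ 2) + α * Y * (Y - y) / Real.sqrt (-α * z + 1)) z := by
    intro z hz
    have h1 : (0:ℝ) < -α * z + 1 := by nlinarith
    have hs : 0 < Real.sqrt (-α * z + 1) := Real.sqrt_pos.2 h1
    have h2 : HasDerivAt (fun w : ℝ => -α * w + 1) (-α) z := by
      simpa using ((hasDerivAt_id z).const_mul (-α)).add_const 1
    have h3 : HasDerivAt (fun w : ℝ => Real.sqrt (-α * w + 1))
        (1 / (2 * Real.sqrt (-α * z + 1)) * (-α)) z :=
      (Real.hasDerivAt_sqrt h1.ne').comp z h2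
    have h4 := (((h3.const_mul (-Y)).add_const Y).sub_const y).pow 2
    have hs' : Real.sqrt (-α * z + 1) ≠ 0 := hs.ne'
    convert h4 using 1
    set s := Real.sqrt (-α * z + 1) with hsdef
    case e'_4 => rfl
    case e'_5 => rfl
    case e'_8 => rfl
    have hs2 : Real.sqrt (1 - α * z) ≠ 0 := by rw [show 1 - α * z = -α * z + 1 by ring]; exact hs'
    field_simp
    ring_nf
    simp [hs2]
  have hderiv : ∀ z : ℝ, HasDerivAt f (d z) z := by
    intro z
    rcases lt_trichotomy z 0 with hz | hz | hz
    · have hmain := hFm z hz.le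
      have heq : f =ᶠ[nhds z] fun w : ℝ => (-Y * Real.sqrt (-α * w + 1) + Y - y) ^ 2 := by
        filter_upwards [Iio_mem_nhds hz] with w hw
        simp only [hf, if_neg (not_le.2 (Set.mem_Iio.1 hw))]
      have : HasDerivAt f (-(α * Y ^ 2) + α * Y * (Y - y) / Real.sqrt (-α * z + 1)) z :=
        hmain.congr_of_eventuallyEq heq
      simpa [hd, if_neg (not_le.2 hz)] using this
    · subst hz
      have hd0p : d 0 = α * Y ^ 2 - α * Y * (Y + y) / Real.sqrt (α * 0 + 1) := by
        simp [hd]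
      have hd0m : d 0 = -(α * Y ^ 2) + α * Y * (Y - y) / Real.sqrt (-α * 0 + 1) := by
        simp [hd, Real.sqrt_one]
        ring
      have hp : HasDerivWithinAt f (d 0) (Set.Ici 0) 0 := by
        rw [hd0p]
        refine ((hFp 0 le_rfl).hasDerivWithinAt).congr ?_ ?_
        · intro w hw
          simp only [hf, if_pos (Set.mem_Ici.1 hw)]
        · simp [hf]
      have hm : HasDerivWithinAt f (d 0) (Set.Iic 0) 0 := by
        rw [hd0m]
        refine ((hFm 0 le_rfl).hasDerivWithinAt).congr ?_ ?_
        · intro w hw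
          rcases eq_or_lt_of_le (Set.mem_Iic.1 hw) with h | h
          · subst h
            simp [hf, Real.sqrt_one]
          · simp only [hf, if_neg (not_le.2 h)]
        · simp [hf, Real.sqrt_one]
      have := hm.union hp
      rw [Set.Iic_union_Ici] at this
      exact hasDerivWithinAt_univ.1 this
    · have hmain := hFp z hz.le
      have heq : f =ᶠ[nhds z] fun w : ℝ => (Y * Real.sqrt (α * w + 1) - Y - y) ^ 2 := by
        filter_upwards [Ioi_mem_nhds hz] with w hw
        simp only [hf, if_pos (Set.mem_Ioi.1 hw).le]
      have : HasDerivAt f (α * Y ^ 2 - α * Y * (Y + y) / Real.sqrt (α * z + 1)) z :=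
        hmain.congr_of_eventuallyEq heq
      simpa [hd, if_pos hz.le] using this
  have hdiff : Differentiable ℝ f := fun z => (hderiv z).differentiableAt
  have hderiv_eq : deriv f = d := funext fun z => (hderiv z).deriv
  have hmono : Monotone (deriv f) := by
    rw [hderiv_eq]
    intro a b hab
    have hYy1 : 0 ≤ Y + y := by linarith
    have hYy2 : 0 ≤ Y - y := by linarith
    by_cases ha : 0 ≤ a
    · have hb : 0 ≤ b := le_trans ha hab
      simp only [hd, if_pos ha, if_pos hb]
      have h1 : (0:ℝ) < Real.sqrt (α * a + 1) := Real.sqrt_pos.2 (by nlinarith)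
      have h2 : Real.sqrt (α * a + 1) ≤ Real.sqrt (α * b + 1) :=
        Real.sqrt_le_sqrt (by nlinarith)
      have := div_le_div_of_nonneg_left (by positivity : (0:ℝ) ≤ α * Y * (Y + y)) h1 h2
      linarith
    · by_cases hb : 0 ≤ b
      · simp only [hd, if_neg ha, if_pos hb]
        have h1a : (1:ℝ) ≤ Real.sqrt (-α * a + 1) := by
          have := Real.sqrt_le_sqrt (show (1:ℝ) ≤ -α * a + 1 by nlinarith [not_le.1 ha])
          simpa using this
        have h1b : (1:ℝ) ≤ Real.sqrt (α * b + 1) := by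
          have := Real.sqrt_le_sqrt (show (1:ℝ) ≤ α * b + 1 by nlinarith)
          simpa using this
        have e1 : α * Y * (Y - y) / Real.sqrt (-α * a + 1) ≤ α * Y * (Y - y) :=
          div_le_self (by positivity) h1a
        have e2 : α * Y * (Y + y) / Real.sqrt (α * b + 1) ≤ α * Y * (Y + y) :=
          div_le_self (by positivity) h1b
        nlinarith
      · simp only [hd, if_neg ha, if_neg hb]
        have h1 : (0:ℝ) < Real.sqrt (-α * b + 1) :=
          Real.sqrt_pos.2 (by nlinarith [not_le.1 hb])
        have h2 : Real.sqrt (-α * b + 1) ≤ Real.sqrt (-α * a + 1) :=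
          Real.sqrt_le_sqrt (by nlinarith)
        have := div_le_div_of_nonneg_left (by positivity : (0:ℝ) ≤ α * Y * (Y - y)) h1 h2
        linarith
  exact hmono.convexOn_univ_of_deriv hdiff
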